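/- For all z ∈ ℝ, the quantity z + φ(z)/Φ(z) is strictly positive, where φ and Φ are the standard normal pdf and cdf. -/

import Mathlib

noncomputable def stdNormalPDF (x : ℝ) : ℝ :=
  Real.exp (-(x ^ 2) / 2) / Real.sqrt (2 * Real.pi)

noncomputable def stdNormalCDF (x : ℝ) : ℝ :=
  ∫ t in Set.Iic x, stdNormalPDF t

open MeasureTheory Set Filter Real
open scoped ENNReal

lemma stdNormalPDF_pos (x : ℝ) : 0 < stdNormalPDF x := by
  unfold stdNormalPDF
  positivity

lemma stdNormalPDF_eq (x : ℝ) :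
    stdNormalPDF x = Real.exp (-(1/2) * x ^ 2) / Real.sqrt (2 * Real.pi) := by
  unfold stdNormalPDF; ring_nf

lemma stdNormalPDF_integrable : Integrable stdNormalPDF := by
  simp only [funext stdNormalPDF_eq, div_eq_mul_inv]
  exact (integrable_exp_neg_mul_sq (by norm_num : (0:ℝ) < 1/2)).mul_const _

lemma stdNormalPDF_mul_integrable : Integrable (fun x => -x * stdNormalPDF x) := by
  have h := ((integrable_mul_exp_neg_mul_sq (by norm_num : (0:ℝ) < 1/2)).mul_const
    (Real.sqrt (2 * Real.pi))⁻¹).neg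
  have heq : (fun x : ℝ => -x * stdNormalPDF x)
      = fun x => -(x * Real.exp (-(1/2) * x ^ 2) * (Real.sqrt (2 * Real.pi))⁻¹) := by
    funext x; rw [stdNormalPDF_eq]; ring
  rw [heq]; exact h

lemma stdNormalPDF_hasDerivAt (x : ℝ) :
    HasDerivAt stdNormalPDF (-x * stdNormalPDF x) x := by
  have h1 : HasDerivAt (fun x : ℝ => -(x ^ 2) / 2) (-x) x := by
    have := ((hasDerivAt_pow 2 x).neg).div_const 2
    refine this.congr_deriv ?_
    simp; ring
  have h2 := (h1.exp).div_const (Real.sqrt (2 * Real.pi))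
  refine h2.congr_deriv ?_
  unfold stdNormalPDF
  ring

lemma stdNormalPDF_tendsto_atBot : Tendsto stdNormalPDF atBot (nhds 0) := by
  have hsq : Tendsto (fun x : ℝ => x ^ 2) atBot atTop := by
    have := (tendsto_pow_atTop (two_ne_zero)).comp
      (tendsto_neg_atBot_atTop (G := ℝ))
    exact this.congr fun x => by simp
  have h1 : Tendsto (fun x : ℝ => -(x ^ 2) / 2) atBot atBot :=
    Tendsto.atBot_div_const (by norm_num)
      ((tendsto_neg_atTop_atBot (G := ℝ)).comp hsq)
  have h2 : Tendsto (fun x : ℝ => Real.exp (-(x ^ 2) / 2)) atBot (nhds 0) :=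
    Real.tendsto_exp_atBot.comp h1
  have h3 := h2.div_const (Real.sqrt (2 * Real.pi))
  rw [zero_div] at h3
  exact h3

lemma integral_neg_mul_pdf (z : ℝ) :
    ∫ t in Iic z, -t * stdNormalPDF t = stdNormalPDF z := by
  have := integral_Iic_of_hasDerivAt_of_tendsto' (f := stdNormalPDF)
    (f' := fun t => -t * stdNormalPDF t) (a := z)
    (fun x _ => stdNormalPDF_hasDerivAt x)
    stdNormalPDF_mul_integrable.integrableOn
    stdNormalPDF_tendsto_atBot
  simpa using this

lemma stdNormalCDF_pos (z : ℝ) : 0 < stdNormalCDF z := by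
  unfold stdNormalCDF
  refine (setIntegral_pos_iff_support_of_nonneg_ae ?_ ?_).2 ?_
  · exact Eventually.of_forall fun x => (stdNormalPDF_pos x).le
  · exact stdNormalPDF_integrable.integrableOn
  · have : Function.support stdNormalPDF = Set.univ := by
      ext x; simp [Function.mem_support, (stdNormalPDF_pos x).ne']
    rw [this, Set.univ_inter]
    simp [Real.volume_Iic]

lemma key (z : ℝ) : 0 < stdNormalPDF z + z * stdNormalCDF z := by
  have hI : ∫ t in Iic z, (z - t) * stdNormalPDF t
      = stdNormalPDF z + z * stdNormalCDF z := by
    have h1 : ∀ t : ℝ, (z - t) * stdNormalPDF t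
        = -t * stdNormalPDF t + z * stdNormalPDF t := by intro t; ring
    rw [funext h1] at *
    rw [integral_add (stdNormalPDF_mul_integrable.integrableOn)
      ((stdNormalPDF_integrable.integrableOn).const_mul z),
      integral_neg_mul_pdf, MeasureTheory.integral_const_mul]
    rfl
  rw [← hI]
  refine (setIntegral_pos_iff_support_of_nonneg_ae ?_ ?_).2 ?_
  · rw [EventuallyLE, ae_restrict_iff' measurableSet_Iic]
    exact Eventually.of_forall fun x hx =>
      mul_nonneg (by simp at hx; linarith) (stdNormalPDF_pos x).le
  · have : Integrable (fun t => (z - t) * stdNormalPDF t) := by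
      have h1 : ∀ t : ℝ, (z - t) * stdNormalPDF t
          = -t * stdNormalPDF t + z * stdNormalPDF t := by intro t; ring
      rw [funext h1]
      exact stdNormalPDF_mul_integrable.add (stdNormalPDF_integrable.const_mul z)
    exact this.integrableOn
  · have hsub : Iio z ⊆ Function.support (fun t => (z - t) * stdNormalPDF t) ∩ Iic z := by
      intro x hx
      simp only [Set.mem_inter_iff, Function.mem_support, mem_Iic]
      refine ⟨?_, le_of_lt hx⟩
      have : (0:ℝ) < (z - x) * stdNormalPDF x :=
        mul_pos (by simp at hx; linarith) (stdNormalPDF_pos x)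
      exact this.ne'
    calc (0:ℝ≥0∞) < volume (Iio z) := by simp [Real.volume_Iio]
      _ ≤ _ := measure_mono hsub

theorem stmt_17 (z : ℝ) : 0 < z + stdNormalPDF z / stdNormalCDF z := by
  have hc := stdNormalCDF_pos z
  have hk := key z
  have : z + stdNormalPDF z / stdNormalCDF z
      = (stdNormalPDF z + z * stdNormalCDF z) / stdNormalCDF z := by
    field_simp; ring
  rw [this]
  positivity
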